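/- (Addition formula.) For all integers m ≥ 0, k ≥ 1 and all real numbers x and y, E_{m,q}^{(0,k)}(x+y) = Σ_{j=0}^{m} C(m,j) [y]_q^{m−j} q^{jy} E_{j,q}^{(0,k)}(x). -/

import Mathlib

open Finset

/-- The q-number `[x]_q = (1 - q^x)/(1 - q)`, with `q^x = exp (x * log q)` (rpow). -/
noncomputable def qNum (q x : ℝ) : ℝ := (1 - q ^ x) / (1 - q)

/-- `[l]_{-q} = (1 - (-q)^l)/(1 + q)` for a natural number `l`. -/
noncomputable def qNumNeg (q : ℝ) (l : ℕ) : ℝ := (1 - (-q) ^ l) / (1 + q)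

/-- The higher-order q-Euler polynomial
`E_{m,q}^{(h,k)}(x) = ((1+q)^k/(1-q)^m) * Σ_{j=0}^m C(m,j) (-1)^j q^{jx} / Π_{i=0}^{k-1} (1 + q^{h+j-i})`. -/
noncomputable def qE (q : ℝ) (h : ℤ) (k m : ℕ) (x : ℝ) : ℝ :=
  ((1 + q) ^ k / (1 - q) ^ m) *
    ∑ j ∈ Finset.range (m + 1),
      (m.choose j : ℝ) * (-1) ^ j * q ^ ((j : ℝ) * x) /
        ∏ i ∈ Finset.range k, (1 + q ^ ((h : ℝ) + (j : ℝ) - (i : ℝ)))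


lemma qE_inner_sum (c : ℝ) (m l : ℕ) (hl : l ≤ m) :
    ∑ j ∈ Finset.range (m + 1),
      (m.choose j : ℝ) * (j.choose l : ℝ) * (1 - c) ^ (m - j) * c ^ j
      = (m.choose l : ℝ) * c ^ l := by
  rw [Finset.range_eq_Ico, ← Finset.sum_Ico_consecutive _ (Nat.zero_le l) (by omega : l ≤ m + 1)]
  have h0 : ∑ j ∈ Finset.Ico 0 l, (m.choose j : ℝ) * (j.choose l : ℝ) * (1 - c) ^ (m - j) * c ^ j = 0 := by
    apply Finset.sum_eq_zero
    intro j hj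
    simp only [Finset.mem_Ico] at hj
    rw [Nat.choose_eq_zero_of_lt hj.2]
    ring
  rw [h0, zero_add, Finset.sum_Ico_eq_sum_range]
  have hcg : ∀ t ∈ Finset.range (m + 1 - l),
      (m.choose (l + t) : ℝ) * ((l + t).choose l : ℝ) * (1 - c) ^ (m - (l + t)) * c ^ (l + t)
      = (m.choose l : ℝ) * c ^ l * (((m - l).choose t : ℝ) * c ^ t * (1 - c) ^ ((m - l) - t)) := by
    intro t ht
    simp only [Finset.mem_range] at ht
    have h1 : l + t ≤ m := by omega
    have h2 : m.choose (l + t) * (l + t).choose l = m.choose l * (m - l).choose t := by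
      have := Nat.choose_mul (n := m) (Nat.le_add_right l t)
      simpa using this
    have h2' : (m.choose (l + t) : ℝ) * ((l + t).choose l : ℝ)
        = (m.choose l : ℝ) * ((m - l).choose t : ℝ) := by exact_mod_cast h2
    have h3 : m - (l + t) = (m - l) - t := by omega
    rw [h3, pow_add]
    linear_combination (c ^ l * c ^ t * (1 - c) ^ ((m - l) - t)) * h2'
  rw [Finset.sum_congr rfl hcg, ← Finset.mul_sum]
  have hbin : ∑ t ∈ Finset.range (m + 1 - l),
      ((m - l).choose t : ℝ) * c ^ t * (1 - c) ^ ((m - l) - t) = 1 := by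
    have hr : m + 1 - l = (m - l) + 1 := by omega
    rw [hr]
    have h := add_pow c (1 - c) (m - l)
    simp only [add_sub_cancel, one_pow] at h
    conv_rhs => rw [h]
    exact Finset.sum_congr rfl fun t _ => by ring
  rw [hbin, mul_one]

lemma qE_key (c : ℝ) (f : ℕ → ℝ) (m : ℕ) :
    ∑ j ∈ Finset.range (m + 1), (m.choose j : ℝ) * (1 - c) ^ (m - j) * c ^ j *
        ∑ l ∈ Finset.range (j + 1), (j.choose l : ℝ) * f l
      = ∑ j ∈ Finset.range (m + 1), (m.choose j : ℝ) * c ^ j * f j := by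
  have hext : ∀ j ∈ Finset.range (m + 1),
      (m.choose j : ℝ) * (1 - c) ^ (m - j) * c ^ j *
        ∑ l ∈ Finset.range (j + 1), (j.choose l : ℝ) * f l
      = ∑ l ∈ Finset.range (m + 1),
          (m.choose j : ℝ) * (j.choose l : ℝ) * (1 - c) ^ (m - j) * c ^ j * f l := by
    intro j hj
    simp only [Finset.mem_range] at hj
    rw [Finset.mul_sum]
    rw [Finset.sum_subset (Finset.range_subset_range.mpr (by omega : j + 1 ≤ m + 1))
      (fun l _ hl => by
        simp only [Finset.mem_range, not_lt] at hl
        rw [Nat.choose_eq_zero_of_lt (show j < l by omega)]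
        ring)]
    exact Finset.sum_congr rfl fun l _ => by ring
  rw [Finset.sum_congr rfl hext, Finset.sum_comm]
  apply Finset.sum_congr rfl
  intro l hl
  simp only [Finset.mem_range] at hl
  rw [← Finset.sum_mul, qE_inner_sum c m l (by omega)]

theorem stmt_4 (q : ℝ) (hq : 0 < q) (hq1 : q ≠ 1) (m k : ℕ) (hk : 1 ≤ k) (x y : ℝ) :
    qE q 0 k m (x + y) =
      ∑ j ∈ Finset.range (m + 1),
        (m.choose j : ℝ) * qNum q y ^ (m - j) * q ^ ((j : ℝ) * y) * qE q 0 k j x := by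
  have hq0 : (1 : ℝ) - q ≠ 0 := sub_ne_zero.mpr (Ne.symm hq1)
  set c := q ^ y with hcdef
  set P : ℕ → ℝ := fun j =>
    ∏ i ∈ Finset.range k, (1 + q ^ (((0 : ℤ) : ℝ) + (j : ℝ) - (i : ℝ))) with hP
  set f : ℕ → ℝ := fun j => (-1 : ℝ) ^ j * q ^ ((j : ℝ) * x) / P j with hf
  have hc : ∀ j : ℕ, q ^ ((j : ℝ) * y) = c ^ j := by
    intro j
    rw [mul_comm, Real.rpow_mul hq.le, Real.rpow_natCast]
  have hLHS : qE q 0 k m (x + y) =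
      ((1 + q) ^ k / (1 - q) ^ m) *
        ∑ j ∈ Finset.range (m + 1), (m.choose j : ℝ) * c ^ j * f j := by
    rw [qE]
    congr 1
    apply Finset.sum_congr rfl
    intro j _
    have hxy : (j : ℝ) * (x + y) = (j : ℝ) * x + (j : ℝ) * y := by ring
    rw [hxy, Real.rpow_add hq, hc j, hf]
    show _ / P j = _
    ring
  have hRHS : ∀ j ∈ Finset.range (m + 1),
      (m.choose j : ℝ) * qNum q y ^ (m - j) * q ^ ((j : ℝ) * y) * qE q 0 k j x
      = ((1 + q) ^ k / (1 - q) ^ m) *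
          ((m.choose j : ℝ) * (1 - c) ^ (m - j) * c ^ j *
            ∑ l ∈ Finset.range (j + 1), (j.choose l : ℝ) * f l) := by
    intro j hj
    simp only [Finset.mem_range] at hj
    rw [qE, qNum, hc j]
    have hsum : (∑ l ∈ Finset.range (j + 1),
        (j.choose l : ℝ) * (-1) ^ l * q ^ ((l : ℝ) * x) /
          ∏ i ∈ Finset.range k, (1 + q ^ (((0 : ℤ) : ℝ) + (l : ℝ) - (i : ℝ))))
        = ∑ l ∈ Finset.range (j + 1), (j.choose l : ℝ) * f l := by
      apply Finset.sum_congr rfl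
      intro l _
      rw [hf]
      show _ / P l = _
      ring
    rw [hsum]
    have hpow : ((1 : ℝ) - q) ^ (m - j) * (1 - q) ^ j = (1 - q) ^ m :=
      pow_sub_mul_pow (1 - q) (by omega)
    rw [div_pow, ← hpow]
    field_simp
    ring
  rw [hLHS, Finset.sum_congr rfl hRHS, ← Finset.mul_sum, qE_key c f m]
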